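/- Let m ≥ 2, and let X(0), X(1), X(2), ... be an infinite sequence of i.i.d. random vectors in ℝ^m with components bounded as X_min,i ≤ X_i(k) ≤ X_max,i, X_min,i > -1, X_max,i finite. For each n ≥ 1 define 𝒳_{n,i} := ∏_{k=0}^{n-1} (1 + X_i(k)) - 1, and for K in the unit simplex 𝒦 and initial account value V(0) > 0 define the account value V(n) = (1 + K^T 𝒳_n) V(0) and V*(n) = (1 + K*^T 𝒳_n) V(0). If for every n ≥ 1, E[(1 + K^T 𝒳_n) / (1 + K*^T 𝒳_n)] ≤ 1, then limsup_{n→∞} (1/n) log(V(n)/V*(n)) ≤ 0 with probability one. -/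

import Mathlib

open MeasureTheory ProbabilityTheory Finset Filter

/-- Account-value form of asymptotic relative optimality: with `V(n) = (1 + Kᵀ 𝒳ₙ) V(0)`
and `V*(n) = (1 + K*ᵀ 𝒳ₙ) V(0)`, if `E[(1 + Kᵀ 𝒳ₙ)/(1 + K*ᵀ 𝒳ₙ)] ≤ 1` for every `n ≥ 1`,
then `limsup (1/n) log(V(n)/V*(n)) ≤ 0` with probability one. -/
theorem asymptotic_relative_optimality_account_value
    {Ω : Type*} [MeasurableSpace Ω] (μ : Measure Ω) [IsProbabilityMeasure μ]
    (m : ℕ) (hm : 2 ≤ m)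
    (X : ℕ → Ω → Fin m → ℝ) (hmeas : ∀ k, Measurable (X k))
    (hindep : iIndepFun X μ)
    (hident : ∀ k, IdentDistrib (X k) (X 0) μ μ)
    (Xmin Xmax : Fin m → ℝ)
    (hXmin : ∀ i, -1 < Xmin i)
    (hbd : ∀ k (ω : Ω) (i : Fin m), Xmin i ≤ X k ω i ∧ X k ω i ≤ Xmax i)
    (K Kstar : Fin m → ℝ)
    (hK0 : ∀ i, 0 ≤ K i) (hK1 : ∑ i, K i = 1)
    (hKstar0 : ∀ i, 0 ≤ Kstar i) (hKstar1 : ∑ i, Kstar i = 1)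
    (V0 : ℝ) (hV0 : 0 < V0)
    (V Vstar : ℕ → Ω → ℝ)
    (hV : ∀ n ω, V n ω =
      (1 + ∑ i, K i * ((∏ k ∈ Finset.range n, (1 + X k ω i)) - 1)) * V0)
    (hVstar : ∀ n ω, Vstar n ω =
      (1 + ∑ i, Kstar i * ((∏ k ∈ Finset.range n, (1 + X k ω i)) - 1)) * V0)
    (hratio : ∀ n : ℕ, 1 ≤ n →
      ∫ ω, (1 + ∑ i, K i * ((∏ k ∈ Finset.range n, (1 + X k ω i)) - 1)) /
            (1 + ∑ i, Kstar i * ((∏ k ∈ Finset.range n, (1 + X k ω i)) - 1)) ∂μ ≤ 1) :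
    ∀ᵐ ω ∂μ, Filter.limsup
      (fun n : ℕ => (1 / (n : ℝ)) * Real.log (V n ω / Vstar n ω)) atTop ≤ 0 := by
  classical
  have hmFin : Nonempty (Fin m) := ⟨⟨0, by omega⟩⟩
  have huniv : (Finset.univ : Finset (Fin m)).Nonempty := Finset.univ_nonempty
  -- the compounded products
  set P : ℕ → Ω → Fin m → ℝ := fun n ω i => ∏ k ∈ Finset.range n, (1 + X k ω i) with hPdef
  set num : ℕ → Ω → ℝ := fun n ω => 1 + ∑ i, K i * (P n ω i - 1) with hnumdef
  set den : ℕ → Ω → ℝ := fun n ω => 1 + ∑ i, Kstar i * (P n ω i - 1) with hdendef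
  set R : ℕ → Ω → ℝ := fun n ω => num n ω / den n ω with hRdef
  -- uniform bounds on the factors
  set C : ℝ := Finset.univ.inf' huniv (fun i => 1 + Xmin i) with hCdef
  set D : ℝ := max C (Finset.univ.sup' huniv (fun i => 1 + Xmax i)) with hDdef
  have hC0 : 0 < C := by
    rw [hCdef, Finset.lt_inf'_iff]
    intro i _
    linarith [hXmin i]
  have hfac : ∀ k ω i, C ≤ 1 + X k ω i ∧ 1 + X k ω i ≤ D := by
    intro k ω i
    constructor
    · exact le_trans (Finset.inf'_le _ (Finset.mem_univ i)) (by linarith [(hbd k ω i).1])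
    · exact le_trans (le_trans (by linarith [(hbd k ω i).2])
        (Finset.le_sup' _ (Finset.mem_univ i))) (le_max_right _ _)
  have hCD : C ≤ D := le_max_left _ _
  have hD0 : 0 < D := lt_of_lt_of_le hC0 hCD
  -- bounds on products
  have hPlb : ∀ n ω i, C ^ n ≤ P n ω i := by
    intro n ω i
    calc C ^ n = ∏ _k ∈ Finset.range n, C := by rw [Finset.prod_const, Finset.card_range]
    _ ≤ P n ω i := Finset.prod_le_prod (fun _ _ => hC0.le) (fun k _ => (hfac k ω i).1)
  have hPub : ∀ n ω i, P n ω i ≤ D ^ n := by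
    intro n ω i
    calc P n ω i ≤ ∏ _k ∈ Finset.range n, D :=
        Finset.prod_le_prod (fun k _ => le_trans hC0.le (hfac k ω i).1)
          (fun k _ => (hfac k ω i).2)
    _ = D ^ n := by rw [Finset.prod_const, Finset.card_range]
  -- rewrite num, den
  have hnum_eq : ∀ n ω, num n ω = ∑ i, K i * P n ω i := by
    intro n ω
    simp only [hnumdef, mul_sub, mul_one, Finset.sum_sub_distrib, hK1]
    ring
  have hden_eq : ∀ n ω, den n ω = ∑ i, Kstar i * P n ω i := by
    intro n ω
    simp only [hdendef, mul_sub, mul_one, Finset.sum_sub_distrib, hKstar1]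
    ring
  have hsum_bounds : ∀ (c : Fin m → ℝ), (∀ i, 0 ≤ c i) → (∑ i, c i = 1) →
      ∀ n ω, C ^ n ≤ ∑ i, c i * P n ω i ∧ ∑ i, c i * P n ω i ≤ D ^ n := by
    intro c hc0 hc1 n ω
    constructor
    · calc C ^ n = ∑ i, c i * C ^ n := by rw [← Finset.sum_mul, hc1, one_mul]
      _ ≤ ∑ i, c i * P n ω i :=
          Finset.sum_le_sum (fun i _ => mul_le_mul_of_nonneg_left (hPlb n ω i) (hc0 i))
    · calc ∑ i, c i * P n ω i ≤ ∑ i, c i * D ^ n :=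
          Finset.sum_le_sum (fun i _ => mul_le_mul_of_nonneg_left (hPub n ω i) (hc0 i))
      _ = D ^ n := by rw [← Finset.sum_mul, hc1, one_mul]
  have hnum_lb : ∀ n ω, C ^ n ≤ num n ω := fun n ω =>
    (hnum_eq n ω) ▸ (hsum_bounds K hK0 hK1 n ω).1
  have hnum_ub : ∀ n ω, num n ω ≤ D ^ n := fun n ω =>
    (hnum_eq n ω) ▸ (hsum_bounds K hK0 hK1 n ω).2
  have hden_lb : ∀ n ω, C ^ n ≤ den n ω := fun n ω =>
    (hden_eq n ω) ▸ (hsum_bounds Kstar hKstar0 hKstar1 n ω).1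
  have hden_ub : ∀ n ω, den n ω ≤ D ^ n := fun n ω =>
    (hden_eq n ω) ▸ (hsum_bounds Kstar hKstar0 hKstar1 n ω).2
  have hCn : ∀ n : ℕ, (0 : ℝ) < C ^ n := fun n => pow_pos hC0 n
  have hDn : ∀ n : ℕ, (0 : ℝ) < D ^ n := fun n => pow_pos hD0 n
  have hnum_pos : ∀ n ω, 0 < num n ω := fun n ω => lt_of_lt_of_le (hCn n) (hnum_lb n ω)
  have hden_pos : ∀ n ω, 0 < den n ω := fun n ω => lt_of_lt_of_le (hCn n) (hden_lb n ω)
  have hRpos : ∀ n ω, 0 < R n ω := fun n ω => div_pos (hnum_pos n ω) (hden_pos n ω)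
  have hRub : ∀ n ω, R n ω ≤ D ^ n / C ^ n := fun n ω =>
    div_le_div₀ (hDn n).le (hnum_ub n ω) (hCn n) (hden_lb n ω)
  have hRlb : ∀ n ω, C ^ n / D ^ n ≤ R n ω := fun n ω =>
    div_le_div₀ (hnum_pos n ω).le (hnum_lb n ω) (hden_pos n ω) (hden_ub n ω)
  -- measurability
  have hPm : ∀ n i, Measurable fun ω => P n ω i := by
    intro n i
    apply Finset.measurable_prod
    intro k _
    exact measurable_const.add ((measurable_pi_apply i).comp (hmeas k))
  have hnumm : ∀ n, Measurable (num n) := by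
    intro n
    apply measurable_const.add
    exact Finset.measurable_sum _ (fun i _ => ((hPm n i).sub measurable_const).const_mul _)
  have hdenm : ∀ n, Measurable (den n) := by
    intro n
    apply measurable_const.add
    exact Finset.measurable_sum _ (fun i _ => ((hPm n i).sub measurable_const).const_mul _)
  have hRm : ∀ n, Measurable (R n) := fun n => (hnumm n).div (hdenm n)
  -- integrability and integral bound
  have hRint : ∀ n, Integrable (R n) μ := by
    intro n
    refine Integrable.mono' (integrable_const (D ^ n / C ^ n)) (hRm n).aestronglyMeasurable
      (ae_of_all _ fun ω => ?_)
    rw [Real.norm_eq_abs, abs_of_pos (hRpos n ω)]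
    exact hRub n ω
  have hint : ∀ n : ℕ, ∫ ω, R n ω ∂μ ≤ 1 := by
    intro n
    rcases Nat.eq_zero_or_pos n with h | h
    · subst h
      have : ∀ ω, R 0 ω = 1 := by
        intro ω
        simp [hRdef, hnumdef, hdendef, hPdef]
      simp [this]
    · exact hratio n h
  -- Markov + Borel–Cantelli for a fixed ε > 0
  have hmain : ∀ ε : ℝ, 0 < ε →
      ∀ᵐ ω ∂μ, ∀ᶠ n : ℕ in atTop, R n ω < Real.exp (ε * n) := by
    intro ε hε
    set A : ℕ → Set Ω := fun n => {ω | Real.exp (ε * n) ≤ R n ω} with hAdef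
    have hμA : ∀ n, μ (A n) ≤ ENNReal.ofReal (Real.exp (-ε * n)) := by
      intro n
      have hmar := mul_meas_ge_le_integral_of_nonneg
        (ae_of_all μ fun ω => (hRpos n ω).le) (hRint n) (Real.exp (ε * n))
      have hexp : (0 : ℝ) < Real.exp (ε * n) := Real.exp_pos _
      have h1 : Real.exp (ε * n) * (μ (A n)).toReal ≤ 1 := le_trans hmar (hint n)
      have h2 : (μ (A n)).toReal ≤ Real.exp (-ε * n) := by
        rw [neg_mul, Real.exp_neg, ← one_div, le_div_iff₀ hexp]
        calc (μ (A n)).toReal * Real.exp (ε * n)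
            = Real.exp (ε * n) * (μ (A n)).toReal := mul_comm _ _
        _ ≤ 1 := h1
      rw [← ENNReal.le_ofReal_iff_toReal_le (measure_ne_top μ _) (Real.exp_nonneg _)] at h2
      exact h2
    have htsum : (∑' n, μ (A n)) ≠ ⊤ := by
      have hle : (∑' n, μ (A n)) ≤ ∑' n : ℕ, (ENNReal.ofReal (Real.exp (-ε))) ^ n := by
        apply ENNReal.tsum_le_tsum
        intro n
        refine le_trans (hμA n) (le_of_eq ?_)
        have hx : Real.exp (-ε * n) = Real.exp (-ε) ^ n := by
          rw [← Real.exp_nat_mul]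
          congr 1
          ring
        rw [hx, ENNReal.ofReal_pow (Real.exp_nonneg _)]
      refine ne_top_of_le_ne_top ?_ hle
      rw [ENNReal.tsum_geometric]
      rw [Ne, ENNReal.inv_eq_top, tsub_eq_zero_iff_le, not_le]
      exact ENNReal.ofReal_lt_one.mpr (Real.exp_lt_one_iff.mpr (by linarith))
    have := ae_eventually_notMem htsum
    filter_upwards [this] with ω hω
    filter_upwards [hω] with n hn
    simpa [hAdef, not_le] using hn
  -- the account-value ratio equals R
  have hVR : ∀ n ω, V n ω / Vstar n ω = R n ω := by
    intro n ω
    rw [hV, hVstar, mul_div_mul_right _ _ (ne_of_gt hV0)]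
  -- limsup ≤ ε a.e., for each ε > 0
  have hlimsup : ∀ ε : ℝ, 0 < ε →
      ∀ᵐ ω ∂μ, Filter.limsup
        (fun n : ℕ => (1 / (n : ℝ)) * Real.log (V n ω / Vstar n ω)) atTop ≤ ε := by
    intro ε hε
    filter_upwards [hmain ε hε] with ω hω
    have hev : ∀ᶠ n : ℕ in atTop,
        (1 / (n : ℝ)) * Real.log (V n ω / Vstar n ω) ≤ ε := by
      filter_upwards [hω, eventually_ge_atTop 1] with n hn hn1
      have hnpos : (0 : ℝ) < n := by exact_mod_cast hn1
      rw [hVR]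
      have hlog : Real.log (R n ω) < ε * n := by
        have h := Real.log_lt_log (hRpos n ω) hn
        simpa [Real.log_exp] using h
      have : (1 / (n : ℝ)) * Real.log (R n ω) < (1 / n) * (ε * n) := by
        apply mul_lt_mul_of_pos_left hlog (by positivity)
      calc (1 / (n : ℝ)) * Real.log (R n ω) ≤ (1 / n) * (ε * n) := this.le
      _ = ε := by field_simp
    refine limsup_le_of_le ?_ hev
    apply isCoboundedUnder_le_of_eventually_le atTop (x := Real.log C - Real.log D)
    filter_upwards [eventually_ge_atTop 1] with n hn1
    have hnpos : (0 : ℝ) < n := by exact_mod_cast hn1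
    rw [hVR]
    have hlog : (n : ℝ) * (Real.log C - Real.log D) ≤ Real.log (R n ω) := by
      have h1 : Real.log (C ^ n / D ^ n) ≤ Real.log (R n ω) :=
        Real.log_le_log (div_pos (hCn n) (hDn n)) (hRlb n ω)
      calc (n : ℝ) * (Real.log C - Real.log D)
          = Real.log (C ^ n / D ^ n) := by
            rw [Real.log_div (hCn n).ne' (hDn n).ne', Real.log_pow, Real.log_pow]
            ring
      _ ≤ Real.log (R n ω) := h1
    calc Real.log C - Real.log D
        = (1 / (n : ℝ)) * ((n : ℝ) * (Real.log C - Real.log D)) := by field_simp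
    _ ≤ (1 / (n : ℝ)) * Real.log (R n ω) :=
        mul_le_mul_of_nonneg_left hlog (by positivity)
  -- conclude by intersecting over ε = 1/(k+1)
  have hall : ∀ᵐ ω ∂μ, ∀ k : ℕ, Filter.limsup
      (fun n : ℕ => (1 / (n : ℝ)) * Real.log (V n ω / Vstar n ω)) atTop ≤ 1 / (k + 1) := by
    rw [ae_all_iff]
    intro k
    exact hlimsup (1 / (k + 1)) (by positivity)
  filter_upwards [hall] with ω hω
  refine le_of_forall_pos_le_add (fun ε hε => ?_)
  obtain ⟨k, hk⟩ := exists_nat_one_div_lt hε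
  calc Filter.limsup (fun n : ℕ => (1 / (n : ℝ)) * Real.log (V n ω / Vstar n ω)) atTop
      ≤ 1 / (k + 1) := hω k
  _ ≤ 0 + ε := by rw [zero_add]; exact hk.le
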